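/- Let A and B be m×n complex matrices and consider the pencil L(λ) = λB + A. Let D ≥ 1 and let ν₁, …, ν_D ∈ ℂ be a sequence in which equal values occupy consecutive positions (i.e., if ν_t = ν_u and t ≤ r ≤ u, then ν_r = ν_t). Let T be the Dm × Dn block matrix, with D×D blocks of size m×n, whose (t,t) block equals ν_t·B + A for each t, whose (t+1,t) block equals B for each t < D, and all of whose other blocks are zero. For each value λ occurring in the sequence, let c_λ be the number of indices t with ν_t = λ. Then rank(T) = Σ_{λ ∈ {ν₁,…,ν_D}} rank(P_λ^{c_λ}(L)); equivalently, the nullity of T equals the sum of the nullities of the matrices P_λ^{c_λ}(L) over the distinct values λ of the sequence. -/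

import Mathlib

open Matrix Kronecker Module

noncomputable section



variable {R : Type*} [Field R]

/-- rectangular rank_reindex -/
theorem rank_reindex' {k l m n : Type*} [Fintype k] [Fintype l] [Fintype m] [Fintype n]
    (e₁ : k ≃ m) (e₂ : l ≃ n) (A : Matrix k l R) :
    rank (reindex e₁ e₂ A) = rank A := by
  rw [Matrix.rank, Matrix.rank, mulVecLin_reindex, LinearMap.range_comp, LinearMap.range_comp,
    LinearEquiv.range, Submodule.map_top, LinearEquiv.finrank_map_eq]

theorem rank_submatrix' {k l m n : Type*} [Fintype k] [Fintype l] [Fintype m] [Fintype n]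
    (A : Matrix k l R) (e₁ : m ≃ k) (e₂ : n ≃ l) :
    rank (A.submatrix e₁ e₂) = rank A := by
  simpa only [reindex_apply, Equiv.symm_symm] using rank_reindex' e₁.symm e₂.symm A

/-- linear equivalence between a pi submodule and the pi of submodules -/
def Submodule.piEquiv' {ι : Type*} {φ : ι → Type*} [∀ i, AddCommGroup (φ i)]
    [∀ i, Module R (φ i)] (p : ∀ i, Submodule R (φ i)) :
    (Submodule.pi Set.univ p) ≃ₗ[R] (∀ i, p i) where
  toFun x := fun i => ⟨x.1 i, x.2 i trivial⟩
  invFun f := ⟨fun i => f i, fun i _ => (f i).2⟩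
  map_add' x y := rfl
  map_smul' c x := rfl
  left_inv x := rfl
  right_inv f := rfl

theorem finrank_pi_submodule {ι : Type*} [Fintype ι] {φ : ι → Type*} [∀ i, AddCommGroup (φ i)]
    [∀ i, Module R (φ i)] [∀ i, FiniteDimensional R (φ i)] (p : ∀ i, Submodule R (φ i)) :
    finrank R (Submodule.pi Set.univ p) = ∑ i, finrank R (p i) := by
  rw [LinearEquiv.finrank_eq (Submodule.piEquiv' p), Module.finrank_pi_fintype]

variable {R : Type*} [Field R]

theorem range_pi_proj {ι : Type*} [Fintype ι] {φ ψ : ι → Type*}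
    [∀ i, AddCommGroup (φ i)] [∀ i, Module R (φ i)]
    [∀ i, AddCommGroup (ψ i)] [∀ i, Module R (ψ i)]
    (f : ∀ i, φ i →ₗ[R] ψ i) :
    LinearMap.range (LinearMap.pi fun i => (f i).comp (LinearMap.proj i)) =
      Submodule.pi Set.univ (fun i => LinearMap.range (f i)) := by
  ext g
  simp only [LinearMap.mem_range, Submodule.mem_pi, Set.mem_univ, forall_true_left]
  constructor
  · rintro ⟨x, rfl⟩ i
    exact ⟨x i, rfl⟩
  · intro h
    choose x hx using h
    exact ⟨x, by ext i; simp [hx]⟩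

theorem rank_blockDiagonal' {ι : Type*} [Fintype ι] [DecidableEq ι] {m n : ι → Type*}
    [∀ i, Fintype (m i)] [∀ i, Fintype (n i)] [∀ i, DecidableEq (n i)]
    (M : ∀ i, Matrix (m i) (n i) R) :
    (Matrix.blockDiagonal' M).rank = ∑ i, (M i).rank := by
  classical
  have key : (Matrix.blockDiagonal' M).mulVecLin =
      (((LinearEquiv.piCurry R (fun (i : ι) (_ : m i) => R)).symm.toLinearMap).comp
        ((LinearMap.pi fun i => (M i).mulVecLin.comp (LinearMap.proj i)).comp
          (LinearEquiv.piCurry R (fun (i : ι) (_ : n i) => R)).toLinearMap)) := by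
    apply LinearMap.ext; intro v; funext ⟨i, j⟩
    simp only [mulVecLin_apply, LinearMap.coe_comp, LinearEquiv.coe_coe, Function.comp_apply,
      LinearEquiv.piCurry_symm_apply, LinearEquiv.piCurry_apply]
    show (blockDiagonal' M).mulVec v ⟨i, j⟩ = _
    rw [Matrix.mulVec, dotProduct]
    rw [← Finset.univ_sigma_univ, Finset.sum_sigma]
    simp only [Matrix.blockDiagonal'_apply]
    rw [Finset.sum_eq_single i]
    · simp [Sigma.uncurry, Sigma.curry, Matrix.mulVec, dotProduct,
        LinearMap.pi_apply]
    · intro b _ hb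
      simp [Ne.symm hb]
    · simp
  rw [Matrix.rank, key, LinearMap.range_comp, LinearMap.range_comp_of_range_eq_top _
      (LinearMap.range_eq_top.mpr (LinearEquiv.piCurry R _).surjective),
    LinearEquiv.finrank_map_eq, range_pi_proj]
  rw [show (∑ i, (M i).rank) = ∑ i, finrank R (LinearMap.range (M i).mulVecLin) from rfl]
  exact finrank_pi_submodule _

/-- similarity via explicit two-sided inverse -/
def MSim {k : Type*} [Fintype k] [DecidableEq k] (M N : Matrix k k ℂ) : Prop :=
  ∃ P Q : Matrix k k ℂ, P * Q = 1 ∧ Q * P = 1 ∧ P * M * Q = N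

theorem MSim.refl {k : Type*} [Fintype k] [DecidableEq k] (M : Matrix k k ℂ) : MSim M M :=
  ⟨1, 1, by simp, by simp, by simp⟩

theorem MSim.trans {k : Type*} [Fintype k] [DecidableEq k] {M N O : Matrix k k ℂ}
    (h₁ : MSim M N) (h₂ : MSim N O) : MSim M O := by
  obtain ⟨P₁, Q₁, hPQ₁, hQP₁, h₁⟩ := h₁
  obtain ⟨P₂, Q₂, hPQ₂, hQP₂, h₂⟩ := h₂
  refine ⟨P₂ * P₁, Q₁ * Q₂, ?_, ?_, ?_⟩
  · rw [Matrix.mul_assoc, ← Matrix.mul_assoc P₁, hPQ₁, Matrix.one_mul, hPQ₂]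
  · rw [Matrix.mul_assoc, ← Matrix.mul_assoc Q₂, hQP₂, Matrix.one_mul, hQP₁]
  · rw [← h₂, ← h₁]; noncomm_ring

theorem MSim.submatrix {k l : Type*} [Fintype k] [DecidableEq k] [Fintype l] [DecidableEq l]
    {M N : Matrix k k ℂ} (h : MSim M N) (e : l ≃ k) :
    MSim (M.submatrix e e) (N.submatrix e e) := by
  obtain ⟨P, Q, hPQ, hQP, hMN⟩ := h
  refine ⟨P.submatrix e e, Q.submatrix e e, ?_, ?_, ?_⟩
  · rw [Matrix.submatrix_mul_equiv, hPQ, Matrix.submatrix_one_equiv]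
  · rw [Matrix.submatrix_mul_equiv, hQP, Matrix.submatrix_one_equiv]
  · rw [Matrix.submatrix_mul_equiv, Matrix.submatrix_mul_equiv, hMN]

/-- the nilpotent lower shift -/
def Smat (a : ℕ) : Matrix (Fin a) (Fin a) ℂ :=
  fun i j => if (i : ℕ) = (j : ℕ) + 1 then 1 else 0

theorem Smat_pow (a p : ℕ) (i j : Fin a) :
    (Smat a ^ p) i j = if (i : ℕ) = (j : ℕ) + p then 1 else 0 := by
  induction p generalizing i j with
  | zero => simp [Matrix.one_apply, Fin.ext_iff]
  | succ p ih =>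
    rw [pow_succ, Matrix.mul_apply]
    by_cases hj : (j : ℕ) + 1 < a
    · rw [Finset.sum_eq_single (⟨(j : ℕ) + 1, hj⟩ : Fin a)]
      · have e1 : (((⟨(j : ℕ) + 1, hj⟩ : Fin a)) : ℕ) = (j : ℕ) + 1 := rfl
        rw [ih]
        simp only [Smat, e1]
        split_ifs <;> simp_all <;> omega
      · intro b _ hb
        have hbv : ¬ ((b : ℕ) = (j : ℕ) + 1) := fun hc => hb (Fin.ext hc)
        simp only [Smat, hbv, if_false, mul_zero]
      · simp
    · have hz : ∀ b : Fin a, (Smat a ^ p) i b * Smat a b j = 0 := by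
        intro b
        simp only [Smat]
        rw [if_neg (by omega), mul_zero]
      rw [Finset.sum_congr rfl fun b _ => hz b, Finset.sum_const_zero, if_neg (by omega)]

theorem Smat_pow_self (a : ℕ) : Smat a ^ a = 0 := by
  ext i j
  rw [Smat_pow]
  simp only [Matrix.zero_apply]
  rw [if_neg (by omega)]

/-- Sylvester-based decoupling -/
theorem sim_fromBlocks_of_sylvester {a b : Type*} [Fintype a] [DecidableEq a] [Fintype b]
    [DecidableEq b] (M₁ : Matrix a a ℂ) (M₂ : Matrix b b ℂ) (E X : Matrix b a ℂ)
    (hX : M₂ * X - X * M₁ = E) :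
    MSim (Matrix.fromBlocks M₁ 0 E M₂) (Matrix.fromBlocks M₁ 0 0 M₂) := by
  refine ⟨Matrix.fromBlocks 1 0 X 1, Matrix.fromBlocks 1 0 (-X) 1, ?_, ?_, ?_⟩
  · rw [Matrix.fromBlocks_multiply]
    simp [← Matrix.fromBlocks_one]
  · rw [Matrix.fromBlocks_multiply]
    simp [← Matrix.fromBlocks_one]
  · rw [Matrix.fromBlocks_multiply, Matrix.fromBlocks_multiply]
    simp only [Matrix.mul_one, Matrix.one_mul, Matrix.zero_mul, Matrix.mul_zero,
      Matrix.mul_neg, add_zero, zero_add, neg_zero]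
    rw [show X * M₁ + E + -(M₂ * X) = 0 by rw [← hX]; abel]

/-- Explicit Sylvester solution for `M₁ = λ•1 + S` -/
theorem exists_sylvester_sol (a : ℕ) {b : Type*} [Fintype b] [DecidableEq b]
    (lam : ℂ) (M₂ : Matrix b b ℂ) (hC : IsUnit (M₂ - lam • 1).det)
    (E : Matrix b (Fin a) ℂ) :
    ∃ X : Matrix b (Fin a) ℂ, M₂ * X - X * (lam • (1 : Matrix (Fin a) (Fin a) ℂ) + Smat a) = E := by
  set C : Matrix b b ℂ := M₂ - lam • 1 with hCdef
  refine ⟨∑ j ∈ Finset.range a, C⁻¹ ^ (j + 1) * E * Smat a ^ j, ?_⟩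
  set X : Matrix b (Fin a) ℂ := ∑ j ∈ Finset.range a, C⁻¹ ^ (j + 1) * E * Smat a ^ j with hXdef
  have key : M₂ * X - X * (lam • 1 + Smat a) = C * X - X * Smat a := by
    rw [hCdef, Matrix.mul_add, Matrix.sub_mul, Matrix.mul_smul, Matrix.smul_mul,
      Matrix.mul_one, Matrix.one_mul]
    abel
  rw [key, hXdef, Matrix.mul_sum, Matrix.sum_mul]
  have hterm : ∀ j, C * (C⁻¹ ^ (j + 1) * E * Smat a ^ j) = C⁻¹ ^ j * E * Smat a ^ j := by
    intro j
    rw [pow_succ', ← Matrix.mul_assoc, ← Matrix.mul_assoc, ← Matrix.mul_assoc,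
      Matrix.mul_nonsing_inv _ hC, Matrix.one_mul]
  have hterm2 : ∀ j, C⁻¹ ^ (j + 1) * E * Smat a ^ j * Smat a
      = C⁻¹ ^ (j + 1) * E * Smat a ^ (j + 1) := by
    intro j
    rw [Matrix.mul_assoc (C⁻¹ ^ (j + 1) * E) (Smat a ^ j) (Smat a), ← pow_succ]
  rw [Finset.sum_congr rfl fun j _ => hterm j, Finset.sum_congr rfl fun j _ => hterm2 j,
    ← Finset.sum_sub_distrib, Finset.sum_range_sub' (fun j => C⁻¹ ^ j * E * Smat a ^ j) a]
  simp [Smat_pow_self]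

def Nfull {k : ℕ} (w : Fin k → ℂ) : Matrix (Fin k) (Fin k) ℂ :=
  fun i j => if i = j then w i else if (i : ℕ) = (j : ℕ) + 1 then 1 else 0

def Nsplit {k : ℕ} (w : Fin k → ℂ) : Matrix (Fin k) (Fin k) ℂ :=
  fun i j => if i = j then w i else if (i : ℕ) = (j : ℕ) + 1 ∧ w i = w j then 1 else 0

theorem sim_fromBlocks_right {a b : Type*} [Fintype a] [DecidableEq a] [Fintype b]
    [DecidableEq b] (M₁ : Matrix a a ℂ) {M₂ M₂' : Matrix b b ℂ} (h : MSim M₂ M₂') :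
    MSim (Matrix.fromBlocks M₁ 0 0 M₂) (Matrix.fromBlocks M₁ 0 0 M₂') := by
  obtain ⟨P, Q, hPQ, hQP, hM⟩ := h
  refine ⟨Matrix.fromBlocks 1 0 0 P, Matrix.fromBlocks 1 0 0 Q, ?_, ?_, ?_⟩
  · rw [Matrix.fromBlocks_multiply]; simp [hPQ, ← Matrix.fromBlocks_one]
  · rw [Matrix.fromBlocks_multiply]; simp [hQP, ← Matrix.fromBlocks_one]
  · rw [Matrix.fromBlocks_multiply, Matrix.fromBlocks_multiply]; simp [hM, Matrix.mul_assoc]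

theorem sim_Nfull_Nsplit : ∀ (k : ℕ) (w : Fin k → ℂ),
    (∀ t u r : Fin k, w t = w u → t ≤ r → r ≤ u → w r = w t) →
    MSim (Nfull w) (Nsplit w) := by
  intro k
  induction k using Nat.strong_induction_on with
  | _ k IH =>
    intro w hw
    rcases Nat.eq_zero_or_pos k with hk | hk
    · subst hk
      have : Nfull w = Nsplit w := by ext i j; exact i.elim0
      rw [this]; exact MSim.refl _
    set z : ℂ := w ⟨0, hk⟩ with hz
    by_cases hall : ∀ i, w i = z
    · have : Nfull w = Nsplit w := by
        ext i j
        simp only [Nfull, Nsplit, hall i, hall j, and_true]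
      rw [this]; exact MSim.refl _
    push_neg at hall
    obtain ⟨i₀, hi₀⟩ := hall
    set S : Finset (Fin k) := Finset.univ.filter (fun i => w i = z) with hS
    set a : ℕ := S.card with ha
    have hdc : ∀ i : Fin k, w i = z → ∀ j : Fin k, j ≤ i → w j = z := by
      intro i hi j hj
      have h0 : w ⟨0, hk⟩ = w i := by rw [← hz, hi]
      exact (hw ⟨0, hk⟩ i j h0 (by simp [Fin.le_def]) hj).trans hz.symm
    have run_iff : ∀ i : Fin k, w i = z ↔ (i : ℕ) < a := by
      intro i
      constructor
      · intro hi
        have hsub : Finset.Iic i ⊆ S := by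
          intro j hj
          rw [Finset.mem_Iic] at hj
          simp only [hS, Finset.mem_filter, Finset.mem_univ, true_and]
          exact hdc i hi j hj
        have := Finset.card_le_card hsub
        rw [Fin.card_Iic] at this
        omega
      · intro hi
        by_contra hne
        have hsub : S ⊆ Finset.Iio i := by
          intro j hj
          simp only [hS, Finset.mem_filter, Finset.mem_univ, true_and] at hj
          rw [Finset.mem_Iio]
          by_contra hji
          push_neg at hji
          exact hne (hdc j hj i hji)
        have := Finset.card_le_card hsub
        rw [Fin.card_Iio] at this
        omega
    have ha_pos : 0 < a := by
      have h0 : (⟨0, hk⟩ : Fin k) ∈ S := by simp [hS, hz]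
      have := Finset.card_pos.mpr ⟨_, h0⟩
      omega
    have ha_lt : a < k := by
      have h1 : ¬ ((i₀ : ℕ) < a) := fun h => hi₀ ((run_iff i₀).mpr h)
      have := i₀.isLt
      omega
    set b : ℕ := k - a with hb
    have hab : k = a + b := by omega
    have hbpos : 0 < b := by omega
    set e : Fin k ≃ Fin a ⊕ Fin b := (finCongr hab).trans finSumFinEquiv.symm with he
    have hval_l : ∀ i' : Fin a, ((e.symm (Sum.inl i') : Fin k) : ℕ) = (i' : ℕ) := by
      intro i'
      simp [he, Equiv.symm_trans_apply, finSumFinEquiv_apply_left]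
    have hval_r : ∀ j' : Fin b, ((e.symm (Sum.inr j') : Fin k) : ℕ) = a + (j' : ℕ) := by
      intro j'
      simp [he, Equiv.symm_trans_apply, finSumFinEquiv_apply_right]
    set w' : Fin b → ℂ := fun j' => w (e.symm (Sum.inr j')) with hw'
    have hw'app : ∀ j', w' j' = w (e.symm (Sum.inr j')) := by intro j'; rw [hw']
    have hw'_ne : ∀ j', w' j' ≠ z := by
      intro j' hc
      rw [hw'app] at hc
      have := (run_iff _).mp hc
      rw [hval_r] at this
      omega
    have hw'_consec : ∀ t u r : Fin b, w' t = w' u → t ≤ r → r ≤ u → w' r = w' t := by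
      intro t u r htu htr hru
      refine hw _ _ _ htu ?_ ?_ <;>
        · rw [Fin.le_def, hval_r, hval_r]
          omega
    set J : Matrix (Fin a) (Fin a) ℂ := z • 1 + Smat a with hJ
    set E : Matrix (Fin b) (Fin a) ℂ :=
      fun j' i' => if (j' : ℕ) = 0 ∧ (i' : ℕ) + 1 = a then 1 else 0 with hE
    have hEapp : ∀ (j' : Fin b) (i' : Fin a),
        E j' i' = if (j' : ℕ) = 0 ∧ (i' : ℕ) + 1 = a then 1 else 0 := by
      intro j' i'; rw [hE]
    have hJapp : ∀ i' j' : Fin a, J i' j'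
        = if i' = j' then z else if (i' : ℕ) = (j' : ℕ) + 1 then 1 else 0 := by
      intro i' j'
      rw [hJ]
      simp only [Matrix.add_apply, Matrix.smul_apply, Matrix.one_apply, Smat, smul_eq_mul]
      by_cases h : i' = j'
      · subst h
        rw [if_pos rfl, if_pos rfl, if_neg (by omega), mul_one, add_zero]
      · rw [if_neg h, if_neg h, mul_zero, zero_add]
    -- decomposition of Nfull
    have hNfull : Nfull w = (Matrix.fromBlocks J 0 E (Nfull w')).submatrix e e := by
      ext i j
      rw [Matrix.submatrix_apply]
      obtain ⟨si, hsi⟩ : ∃ si, e i = si := ⟨e i, rfl⟩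
      obtain ⟨sj, hsj⟩ : ∃ sj, e j = sj := ⟨e j, rfl⟩
      have hi : i = e.symm si := by rw [← hsi, Equiv.symm_apply_apply]
      have hj : j = e.symm sj := by rw [← hsj, Equiv.symm_apply_apply]
      rw [hsi, hsj]
      rcases si with i' | i' <;> rcases sj with j' | j' <;>
        [skip; skip; skip; skip] <;> simp only [Nfull]
      · -- inl inl
        rw [Matrix.fromBlocks_apply₁₁, hJapp]
        have hvi : (i : ℕ) = (i' : ℕ) := by rw [hi]; exact hval_l i'
        have hvj : (j : ℕ) = (j' : ℕ) := by rw [hj]; exact hval_l j'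
        have hwi : w i = z := (run_iff i).mpr (by have := i'.isLt; omega)
        by_cases h : (i' : ℕ) = (j' : ℕ)
        · rw [if_pos (show i = j from Fin.ext (by omega)), if_pos (Fin.ext h), hwi]
        · have hne : ¬ i = j := fun hc => h (by rw [← hvi, ← hvj, hc])
          have hne' : ¬ i' = j' := fun hc => h (congrArg Fin.val hc)
          rw [if_neg hne, if_neg hne']
          by_cases h2 : (i' : ℕ) = (j' : ℕ) + 1
          · rw [if_pos (show (i : ℕ) = (j : ℕ) + 1 by omega), if_pos h2]
          · rw [if_neg (show ¬ (i : ℕ) = (j : ℕ) + 1 by omega), if_neg h2]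
      · -- inl inr
        rw [Matrix.fromBlocks_apply₁₂, Matrix.zero_apply]
        have hvi : (i : ℕ) = (i' : ℕ) := by rw [hi]; exact hval_l i'
        have hvj : (j : ℕ) = a + (j' : ℕ) := by rw [hj]; exact hval_r j'
        have hia := i'.isLt
        rw [if_neg (show ¬ i = j from fun hc => by rw [hc] at hvi; omega),
          if_neg (show ¬ (i : ℕ) = (j : ℕ) + 1 by omega)]
      · -- inr inl
        rw [Matrix.fromBlocks_apply₂₁, hEapp]
        have hvi : (i : ℕ) = a + (i' : ℕ) := by rw [hi]; exact hval_r i'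
        have hvj : (j : ℕ) = (j' : ℕ) := by rw [hj]; exact hval_l j'
        have hja := j'.isLt
        rw [if_neg (show ¬ i = j from fun hc => by rw [hc] at hvi; omega)]
        by_cases h2 : (i' : ℕ) = 0 ∧ (j' : ℕ) + 1 = a
        · rw [if_pos (show (i : ℕ) = (j : ℕ) + 1 by omega), if_pos h2]
        · rw [if_neg (show ¬ (i : ℕ) = (j : ℕ) + 1 by omega), if_neg h2]
      · -- inr inr
        rw [Matrix.fromBlocks_apply₂₂]
        simp only [Nfull]
        have hvi : (i : ℕ) = a + (i' : ℕ) := by rw [hi]; exact hval_r i'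
        have hvj : (j : ℕ) = a + (j' : ℕ) := by rw [hj]; exact hval_r j'
        have hwiv : w i = w' i' := by rw [hw'app, ← hi]
        by_cases h : (i' : ℕ) = (j' : ℕ)
        · rw [if_pos (show i = j from Fin.ext (by omega)), if_pos (Fin.ext h), hwiv]
        · have hne : ¬ i = j := fun hc => h (by have := congrArg Fin.val hc; omega)
          have hne' : ¬ i' = j' := fun hc => h (congrArg Fin.val hc)
          rw [if_neg hne, if_neg hne']
          by_cases h2 : (i' : ℕ) = (j' : ℕ) + 1
          · rw [if_pos (show (i : ℕ) = (j : ℕ) + 1 by omega), if_pos h2]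
          · rw [if_neg (show ¬ (i : ℕ) = (j : ℕ) + 1 by omega), if_neg h2]
    -- decomposition of Nsplit
    have hNsplit : Nsplit w = (Matrix.fromBlocks J 0 0 (Nsplit w')).submatrix e e := by
      ext i j
      rw [Matrix.submatrix_apply]
      obtain ⟨si, hsi⟩ : ∃ si, e i = si := ⟨e i, rfl⟩
      obtain ⟨sj, hsj⟩ : ∃ sj, e j = sj := ⟨e j, rfl⟩
      have hi : i = e.symm si := by rw [← hsi, Equiv.symm_apply_apply]
      have hj : j = e.symm sj := by rw [← hsj, Equiv.symm_apply_apply]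
      rw [hsi, hsj]
      rcases si with i' | i' <;> rcases sj with j' | j' <;>
        [skip; skip; skip; skip] <;> simp only [Nsplit]
      · -- inl inl
        rw [Matrix.fromBlocks_apply₁₁, hJapp]
        have hvi : (i : ℕ) = (i' : ℕ) := by rw [hi]; exact hval_l i'
        have hvj : (j : ℕ) = (j' : ℕ) := by rw [hj]; exact hval_l j'
        have hwi : w i = z := (run_iff i).mpr (by have := i'.isLt; omega)
        have hwj : w j = z := (run_iff j).mpr (by have := j'.isLt; omega)
        by_cases h : (i' : ℕ) = (j' : ℕ)
        · rw [if_pos (show i = j from Fin.ext (by omega)), if_pos (Fin.ext h), hwi]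
        · have hne : ¬ i = j := fun hc => h (by rw [← hvi, ← hvj, hc])
          have hne' : ¬ i' = j' := fun hc => h (congrArg Fin.val hc)
          rw [if_neg hne, if_neg hne']
          by_cases h2 : (i' : ℕ) = (j' : ℕ) + 1
          · rw [if_pos (show (i : ℕ) = (j : ℕ) + 1 ∧ w i = w j from
              ⟨by omega, by rw [hwi, hwj]⟩), if_pos h2]
          · rw [if_neg (show ¬ ((i : ℕ) = (j : ℕ) + 1 ∧ w i = w j) from
              fun hc => h2 (by have := hc.1; omega)), if_neg h2]
      · -- inl inr
        rw [Matrix.fromBlocks_apply₁₂, Matrix.zero_apply]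
        have hvi : (i : ℕ) = (i' : ℕ) := by rw [hi]; exact hval_l i'
        have hvj : (j : ℕ) = a + (j' : ℕ) := by rw [hj]; exact hval_r j'
        have hia := i'.isLt
        rw [if_neg (show ¬ i = j from fun hc => by rw [hc] at hvi; omega),
          if_neg (show ¬ ((i : ℕ) = (j : ℕ) + 1 ∧ w i = w j) from
            fun hc => by have := hc.1; omega)]
      · -- inr inl
        rw [Matrix.fromBlocks_apply₂₁, Matrix.zero_apply]
        have hvi : (i : ℕ) = a + (i' : ℕ) := by rw [hi]; exact hval_r i'
        have hvj : (j : ℕ) = (j' : ℕ) := by rw [hj]; exact hval_l j'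
        have hja := j'.isLt
        have hwiv : w i = w' i' := by rw [hw'app, ← hi]
        have hwj : w j = z := (run_iff j).mpr (by omega)
        rw [if_neg (show ¬ i = j from fun hc => by rw [hc] at hvi; omega),
          if_neg (show ¬ ((i : ℕ) = (j : ℕ) + 1 ∧ w i = w j) from
            fun hc => hw'_ne i' (by rw [← hwiv, hc.2, hwj]))]
      · -- inr inr
        rw [Matrix.fromBlocks_apply₂₂]
        simp only [Nsplit]
        have hvi : (i : ℕ) = a + (i' : ℕ) := by rw [hi]; exact hval_r i'
        have hvj : (j : ℕ) = a + (j' : ℕ) := by rw [hj]; exact hval_r j'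
        have hwiv : w i = w' i' := by rw [hw'app, ← hi]
        have hwjv : w j = w' j' := by rw [hw'app, ← hj]
        by_cases h : (i' : ℕ) = (j' : ℕ)
        · rw [if_pos (show i = j from Fin.ext (by omega)), if_pos (Fin.ext h), hwiv]
        · have hne : ¬ i = j := fun hc => h (by have := congrArg Fin.val hc; omega)
          have hne' : ¬ i' = j' := fun hc => h (congrArg Fin.val hc)
          rw [if_neg hne, if_neg hne']
          by_cases h2 : (i' : ℕ) = (j' : ℕ) + 1 ∧ w' i' = w' j'
          · rw [if_pos (show (i : ℕ) = (j : ℕ) + 1 ∧ w i = w j from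
              ⟨by omega, by rw [hwiv, hwjv]; exact h2.2⟩), if_pos h2]
          · rw [if_neg (show ¬ ((i : ℕ) = (j : ℕ) + 1 ∧ w i = w j) from
              fun hc => h2 ⟨by have := hc.1; omega,
                by rw [← hwiv, ← hwjv]; exact hc.2⟩), if_neg h2]
    -- invertibility
    have hC : IsUnit (Nfull w' - z • (1 : Matrix (Fin b) (Fin b) ℂ)).det := by
      have htri : (Nfull w' - z • (1 : Matrix (Fin b) (Fin b) ℂ)).BlockTriangular
          OrderDual.toDual := by
        intro p q hpq
        have hlt : (p : ℕ) < (q : ℕ) := hpq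
        have hne : ¬ p = q := fun hc => by rw [hc] at hlt; omega
        simp only [Matrix.sub_apply, Matrix.smul_apply, Matrix.one_apply, Nfull, smul_eq_mul]
        rw [if_neg hne, if_neg (show ¬ (p : ℕ) = (q : ℕ) + 1 by omega), if_neg hne]
        simp
      rw [Matrix.det_of_lowerTriangular _ htri, isUnit_iff_ne_zero]
      apply Finset.prod_ne_zero_iff.mpr
      intro p _
      simp only [Matrix.sub_apply, Matrix.smul_apply, Matrix.one_apply, Nfull,
        eq_self_iff_true, if_true, smul_eq_mul, mul_one]
      exact sub_ne_zero.mpr (hw'_ne p)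
    obtain ⟨X, hX⟩ := exists_sylvester_sol a z (Nfull w') hC E
    have step1 : MSim (Matrix.fromBlocks J 0 E (Nfull w'))
        (Matrix.fromBlocks J 0 0 (Nfull w')) := by
      rw [hJ]
      exact sim_fromBlocks_of_sylvester _ _ _ X hX
    have step2 : MSim (Matrix.fromBlocks J 0 0 (Nfull w'))
        (Matrix.fromBlocks J 0 0 (Nsplit w')) :=
      sim_fromBlocks_right _ (IH b (by omega) w' hw'_consec)
    have hfin := (step1.trans step2).submatrix e
    rw [← hNfull, ← hNsplit] at hfin
    exact hfin

/-- For the pencil `L(λ) = λB + A`, the `dm × dn` block matrix `P_μ^d(L)` with diagonal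
blocks `L(μ) = μB + A` and first-subdiagonal blocks `B`. -/
def pencilBlockMat {m n : ℕ} (A B : Matrix (Fin m) (Fin n) ℂ) (μ : ℂ) (d : ℕ) :
    Matrix (Fin d × Fin m) (Fin d × Fin n) ℂ :=
  fun p q =>
    if p.1 = q.1 then (μ • B + A) p.2 q.2
    else if (p.1 : ℕ) = (q.1 : ℕ) + 1 then B p.2 q.2 else 0

/-- the set of positions carrying the value `l` -/
def fibSet {D : ℕ} (ν : Fin D → ℂ) (l : ℂ) : Finset (Fin D) :=
  Finset.univ.filter (fun t : Fin D => ν t = l)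

/-- the order-embedding of the fiber of `l` -/
def fEmb {D : ℕ} (ν : Fin D → ℂ) (l : ℂ) : Fin ((fibSet ν l).card) → Fin D :=
  fun k => (((fibSet ν l).orderIsoOfFin rfl) k : Fin D)

theorem fEmb_mem {D : ℕ} (ν : Fin D → ℂ) (l : ℂ) (k : Fin ((fibSet ν l).card)) :
    ν (fEmb ν l k) = l := by
  have h := (((fibSet ν l).orderIsoOfFin rfl) k).2
  unfold fibSet at h
  exact (Finset.mem_filter.mp h).2

theorem fEmb_mono {D : ℕ} (ν : Fin D → ℂ) (l : ℂ) (k k' : Fin ((fibSet ν l).card))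
    (h : k < k') : (fEmb ν l k : ℕ) < (fEmb ν l k' : ℕ) := by
  have : (((fibSet ν l).orderIsoOfFin rfl) k : Fin D) < (((fibSet ν l).orderIsoOfFin rfl) k' : Fin D) :=
    ((fibSet ν l).orderIsoOfFin rfl).lt_iff_lt.mpr h
  exact this

theorem fEmb_inj {D : ℕ} (ν : Fin D → ℂ) (l : ℂ) (k k' : Fin ((fibSet ν l).card))
    (h : fEmb ν l k = fEmb ν l k') : k = k' := by
  rcases lt_trichotomy k k' with hlt | hlt | hlt
  · exact absurd (congrArg Fin.val h) (by have := fEmb_mono ν l k k' hlt; omega)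
  · exact hlt
  · exact absurd (congrArg Fin.val h) (by have := fEmb_mono ν l k' k hlt; omega)

theorem fEmb_consec {D : ℕ} (ν : Fin D → ℂ)
    (hconsec : ∀ t u r : Fin D, ν t = ν u → t ≤ r → r ≤ u → ν r = ν t)
    (l : ℂ) (k k' : Fin ((fibSet ν l).card)) (hk : (k : ℕ) = (k' : ℕ) + 1) :
    (fEmb ν l k : ℕ) = (fEmb ν l k' : ℕ) + 1 := by
  have hlt : (fEmb ν l k' : ℕ) < (fEmb ν l k : ℕ) :=
    fEmb_mono ν l k' k (by rw [Fin.lt_def]; omega)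
  have hltD : (fEmb ν l k' : ℕ) + 1 < D := by
    have := (fEmb ν l k).isLt
    omega
  set r : Fin D := ⟨(fEmb ν l k' : ℕ) + 1, hltD⟩ with hr
  have hrv : (r : ℕ) = (fEmb ν l k' : ℕ) + 1 := rfl
  have hνr : ν r = ν (fEmb ν l k') := by
    refine hconsec (fEmb ν l k') (fEmb ν l k) r ?_ ?_ ?_
    · rw [fEmb_mem ν l k', fEmb_mem ν l k]
    · rw [Fin.le_def]; omega
    · rw [Fin.le_def]; omega
  have hrmem : r ∈ fibSet ν l := by
    unfold fibSet
    rw [Finset.mem_filter]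
    exact ⟨Finset.mem_univ r, by rw [hνr, fEmb_mem ν l k']⟩
  set idx : Fin ((fibSet ν l).card) := ((fibSet ν l).orderIsoOfFin rfl).symm ⟨r, hrmem⟩ with hidx
  have hgidx : fEmb ν l idx = r := by
    rw [fEmb, hidx]
    rw [OrderIso.apply_symm_apply]
  have hidxgt : k' < idx := by
    by_contra hcon
    push_neg at hcon
    rcases eq_or_lt_of_le hcon with hcon | hcon
    · rw [hcon] at hgidx
      have := congrArg Fin.val hgidx
      rw [hrv] at this
      omega
    · have := fEmb_mono ν l idx k' hcon
      rw [hgidx, hrv] at this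
      omega
  have hfin : (fEmb ν l k : ℕ) ≤ (fEmb ν l idx : ℕ) := by
    rcases eq_or_lt_of_le (show k ≤ idx from by
        rw [Fin.le_def]; have := hidxgt; rw [Fin.lt_def] at this; omega) with h | h
    · rw [h]
    · exact le_of_lt (fEmb_mono ν l k idx h)
  rw [hgidx, hrv] at hfin
  omega

theorem fEmb_consec_iff {D : ℕ} (ν : Fin D → ℂ)
    (hconsec : ∀ t u r : Fin D, ν t = ν u → t ≤ r → r ≤ u → ν r = ν t)
    (l : ℂ) (k k' : Fin ((fibSet ν l).card)) :
    (fEmb ν l k : ℕ) = (fEmb ν l k' : ℕ) + 1 ↔ (k : ℕ) = (k' : ℕ) + 1 := by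
  constructor
  · intro h
    have hlt : (k' : ℕ) < (k : ℕ) := by
      by_contra hcon
      push_neg at hcon
      rcases eq_or_lt_of_le hcon with hcon | hcon
      · rw [show k = k' from Fin.ext hcon] at h; omega
      · have := fEmb_mono ν l k k' (by rwa [Fin.lt_def])
        omega
    have hk1 : (k' : ℕ) + 1 < (fibSet ν l).card := by
      have := k.isLt
      omega
    have h2 := fEmb_consec ν hconsec l ⟨(k' : ℕ) + 1, hk1⟩ k' rfl
    have heq : fEmb ν l ⟨(k' : ℕ) + 1, hk1⟩ = fEmb ν l k := Fin.ext (by omega)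
    have := congrArg Fin.val (fEmb_inj ν l _ _ heq)
    simpa using this.symm
  · exact fEmb_consec ν hconsec l k k'

/-- Block-diagonalization of the coupled matrix `P^{d₁,…,d_s}_{λ₁,…,λ_s}(L)`: if the
values `ν₁, …, ν_D` are listed with equal values in consecutive positions, then the block
matrix `T` with diagonal blocks `ν_t B + A` and subdiagonal blocks `B` has rank equal to
the sum, over the distinct values `λ` of the sequence, of the ranks of `P_λ^{c_λ}(L)`,
where `c_λ` is the number of occurrences of `λ`. -/
theorem rank_coupled_pencil_block (m n D : ℕ) (hD : 1 ≤ D)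
    (A B : Matrix (Fin m) (Fin n) ℂ) (ν : Fin D → ℂ)
    (hconsec : ∀ t u r : Fin D, ν t = ν u → t ≤ r → r ≤ u → ν r = ν t) :
    (Matrix.rank (fun p q =>
        if p.1 = q.1 then (ν p.1 • B + A) p.2 q.2
        else if (p.1 : ℕ) = (q.1 : ℕ) + 1 then B p.2 q.2 else 0 :
      Matrix (Fin D × Fin m) (Fin D × Fin n) ℂ))
      = ∑ l ∈ Finset.image ν Finset.univ,
          (pencilBlockMat A B l ((Finset.univ.filter (fun t : Fin D => ν t = l)).card)).rank := by
  classical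
  have TdefF : (fun p q =>
        if p.1 = q.1 then (ν p.1 • B + A) p.2 q.2
        else if (p.1 : ℕ) = (q.1 : ℕ) + 1 then B p.2 q.2 else 0 :
      Matrix (Fin D × Fin m) (Fin D × Fin n) ℂ)
      = Nfull ν ⊗ₖ B + (1 : Matrix (Fin D) (Fin D) ℂ) ⊗ₖ A := by
    ext ⟨p1, p2⟩ ⟨q1, q2⟩
    simp only [Matrix.add_apply, Matrix.kroneckerMap_apply, Nfull, Matrix.one_apply,
      Matrix.smul_apply, Pi.add_apply, smul_eq_mul]
    by_cases h : p1 = q1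
    · rw [if_pos h, if_pos h, if_pos h, one_mul]
    · rw [if_neg h, if_neg h, if_neg h, zero_mul, add_zero]
      split_ifs <;> simp
  obtain ⟨P, Q, hPQ, hQP, hSim⟩ := sim_Nfull_Nsplit D ν hconsec
  have hdetP : IsUnit P.det :=
    IsUnit.of_mul_eq_one Q.det (by rw [← Matrix.det_mul, hPQ, Matrix.det_one])
  have hdetQ : IsUnit Q.det :=
    IsUnit.of_mul_eq_one P.det (by rw [← Matrix.det_mul, hQP, Matrix.det_one])
  have hkronP : IsUnit (P ⊗ₖ (1 : Matrix (Fin m) (Fin m) ℂ)).det := by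
    rw [Matrix.det_kronecker, Matrix.det_one, one_pow, mul_one]
    exact hdetP.pow _
  have hkronQ : IsUnit (Q ⊗ₖ (1 : Matrix (Fin n) (Fin n) ℂ)).det := by
    rw [Matrix.det_kronecker, Matrix.det_one, one_pow, mul_one]
    exact hdetQ.pow _
  have hmul : (P ⊗ₖ (1 : Matrix (Fin m) (Fin m) ℂ))
        * (Nfull ν ⊗ₖ B + (1 : Matrix (Fin D) (Fin D) ℂ) ⊗ₖ A)
        * (Q ⊗ₖ (1 : Matrix (Fin n) (Fin n) ℂ))
      = Nsplit ν ⊗ₖ B + (1 : Matrix (Fin D) (Fin D) ℂ) ⊗ₖ A := by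
    rw [Matrix.mul_add, Matrix.add_mul,
      ← Matrix.mul_kronecker_mul, ← Matrix.mul_kronecker_mul,
      ← Matrix.mul_kronecker_mul, ← Matrix.mul_kronecker_mul,
      Matrix.one_mul, Matrix.mul_one, Matrix.mul_one, Matrix.one_mul, hSim,
      Matrix.mul_one, hPQ]
  have hrank1 : Matrix.rank (Nfull ν ⊗ₖ B + (1 : Matrix (Fin D) (Fin D) ℂ) ⊗ₖ A)
      = Matrix.rank (Nsplit ν ⊗ₖ B + (1 : Matrix (Fin D) (Fin D) ℂ) ⊗ₖ A) := by
    rw [← hmul, Matrix.rank_mul_eq_left_of_isUnit_det _ _ hkronQ,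
      Matrix.rank_mul_eq_right_of_isUnit_det _ _ hkronP]
  rw [TdefF, hrank1]
  -- index equivalences
  have himgmem : ∀ t : Fin D, ν t ∈ Finset.image ν Finset.univ := fun t =>
    Finset.mem_image_of_mem ν (Finset.mem_univ t)
  set f : Fin D → {x // x ∈ Finset.image ν Finset.univ} := fun t => ⟨ν t, himgmem t⟩ with hf
  have hfiber : ∀ l : {x // x ∈ Finset.image ν Finset.univ}, ∀ t : Fin D,
      t ∈ fibSet ν ↑l ↔ f t = l := by
    intro l t
    unfold fibSet
    rw [Finset.mem_filter]
    constructor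
    · intro h; exact Subtype.ext h.2
    · intro h; exact ⟨Finset.mem_univ t, congrArg Subtype.val h⟩
  set eSig :=
    (Equiv.sigmaCongrRight (fun l : {x // x ∈ Finset.image ν Finset.univ} =>
      (((fibSet ν ↑l).orderIsoOfFin rfl).toEquiv).trans
        (Equiv.subtypeEquivRight (hfiber l)))).trans (Equiv.sigmaFiberEquiv f) with heSig
  set eRow :=
    ((Equiv.sigmaProdDistrib (fun l : {x // x ∈ Finset.image ν Finset.univ} =>
        Fin ((fibSet ν ↑l).card)) (Fin m)).symm.trans
      (Equiv.prodCongr eSig (Equiv.refl (Fin m)))) with heRow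
  set eCol :=
    ((Equiv.sigmaProdDistrib (fun l : {x // x ∈ Finset.image ν Finset.univ} =>
        Fin ((fibSet ν ↑l).card)) (Fin n)).symm.trans
      (Equiv.prodCongr eSig (Equiv.refl (Fin n)))) with heCol
  have heRow_app : ∀ (l : {x // x ∈ Finset.image ν Finset.univ})
      (k : Fin ((fibSet ν ↑l).card)) (x : Fin m),
      eRow ⟨l, (k, x)⟩ = (fEmb ν ↑l k, x) := fun l k x => rfl
  have heCol_app : ∀ (l : {x // x ∈ Finset.image ν Finset.univ})
      (k : Fin ((fibSet ν ↑l).card)) (y : Fin n),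
      eCol ⟨l, (k, y)⟩ = (fEmb ν ↑l k, y) := fun l k y => rfl
  have hblock : (Nsplit ν ⊗ₖ B + (1 : Matrix (Fin D) (Fin D) ℂ) ⊗ₖ A).submatrix eRow eCol
      = Matrix.blockDiagonal' (fun l : {x // x ∈ Finset.image ν Finset.univ} =>
          pencilBlockMat A B ↑l ((fibSet ν ↑l).card)) := by
    ext ⟨l, k, x⟩ ⟨l', k', y⟩
    rw [Matrix.submatrix_apply, heRow_app, heCol_app]
    simp only [Matrix.add_apply, Matrix.kroneckerMap_apply, Nsplit, Matrix.one_apply]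
    by_cases hl : l = l'
    · subst hl
      rw [Matrix.blockDiagonal'_apply_eq]
      show _ = pencilBlockMat A B ↑l ((fibSet ν ↑l).card) (k, x) (k', y)
      rw [pencilBlockMat]
      by_cases hk : k = k'
      · subst hk
        rw [if_pos rfl, if_pos rfl, if_pos rfl, fEmb_mem ν ↑l k]
        simp only [Matrix.add_apply, Matrix.smul_apply, smul_eq_mul, one_mul]
      · have hne : ¬ fEmb ν ↑l k = fEmb ν ↑l k' := fun hc => hk (fEmb_inj ν ↑l k k' hc)
        rw [if_neg hne, if_neg hne, if_neg hk]
        by_cases h2 : (k : ℕ) = (k' : ℕ) + 1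
        · rw [if_pos (show ((fEmb ν ↑l k : Fin D) : ℕ) = ((fEmb ν ↑l k' : Fin D) : ℕ) + 1
              ∧ ν (fEmb ν ↑l k) = ν (fEmb ν ↑l k') from
              ⟨(fEmb_consec_iff ν hconsec ↑l k k').mpr h2, by rw [fEmb_mem ν ↑l k, fEmb_mem ν ↑l k']⟩),
            if_pos h2, zero_mul, add_zero, one_mul]
        · rw [if_neg (show ¬ (((fEmb ν ↑l k : Fin D) : ℕ) = ((fEmb ν ↑l k' : Fin D) : ℕ) + 1
              ∧ ν (fEmb ν ↑l k) = ν (fEmb ν ↑l k')) from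
              fun hc => h2 ((fEmb_consec_iff ν hconsec ↑l k k').mp hc.1)), if_neg h2,
            zero_mul, zero_mul, add_zero]
    · rw [Matrix.blockDiagonal'_apply_ne _ _ _ hl]
      have hνne : ν (fEmb ν ↑l k) ≠ ν (fEmb ν ↑l' k') := by
        rw [fEmb_mem ν ↑l k, fEmb_mem ν ↑l' k']
        exact fun hc => hl (Subtype.ext hc)
      have hne : ¬ fEmb ν ↑l k = fEmb ν ↑l' k' := fun hc => hνne (by rw [hc])
      rw [if_neg hne, if_neg hne, if_neg (fun hc => hνne hc.2), zero_mul, zero_mul, add_zero]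
  have hr2 := congrArg Matrix.rank hblock
  rw [rank_submatrix'] at hr2
  rw [hr2, rank_blockDiagonal']
  rw [← Finset.sum_coe_sort (Finset.image ν Finset.univ)
    (fun l => (pencilBlockMat A B l ((Finset.univ.filter (fun t : Fin D => ν t = l)).card)).rank)]
  rfl

end
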